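/- With the entropy of a finite poset α defined as H(α) = log₂ of the number of linear extensions of α, for any SP-expression Ψ on n variables generating order α with dual order α*, the sum H(α) + H(α*) equals log₂(n!). -/
import Mathlib


/-- Series-parallel expressions: each leaf is a distinct variable. -/
inductive SP where
  | leaf : SP
  | ser : SP → SP → SP
  | par : SP → SP → SP

/-- The set of elements (variables) of an SP-expression. -/
def SP.carrier : SP → Type
  | .leaf => Unit
  | .ser a b => a.carrier ⊕ b.carrier
  | .par a b => a.carrier ⊕ b.carrier

/-- The partial order generated by an SP-expression. -/
def SP.le : (s : SP) → s.carrier → s.carrier → Prop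
  | .leaf, _, _ => True
  | .ser a _, .inl x, .inl y => a.le x y
  | .ser _ b, .inr x, .inr y => b.le x y
  | .ser _ _, .inl _, .inr _ => True
  | .ser _ _, .inr _, .inl _ => False
  | .par a _, .inl x, .inl y => a.le x y
  | .par _ b, .inr x, .inr y => b.le x y
  | .par _ _, .inl _, .inr _ => False
  | .par _ _, .inr _, .inl _ => False

/-- Number of variables of an SP-expression. -/
def SP.size : SP → ℕ
  | .leaf => 1
  | .ser a b => a.size + b.size
  | .par a b => a.size + b.size

instance SP.fintypeCarrier : (s : SP) → Fintype s.carrier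
  | .leaf => inferInstanceAs (Fintype Unit)
  | .ser a b =>
      letI := fintypeCarrier a; letI := fintypeCarrier b
      inferInstanceAs (Fintype (a.carrier ⊕ b.carrier))
  | .par a b =>
      letI := fintypeCarrier a; letI := fintypeCarrier b
      inferInstanceAs (Fintype (a.carrier ⊕ b.carrier))

/-- Dual expression: interchange series and parallel. -/
def SP.dual : SP → SP
  | .leaf => .leaf
  | .ser a b => .par a.dual b.dual
  | .par a b => .ser a.dual b.dual

/-- The canonical identification of elements of `s` with elements of `s.dual`. -/
def SP.dualEquiv : (s : SP) → s.carrier ≃ s.dual.carrier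
  | .leaf => Equiv.refl _
  | .ser a b => Equiv.sumCongr a.dualEquiv b.dualEquiv
  | .par a b => Equiv.sumCongr a.dualEquiv b.dualEquiv

/-- Number of linear extensions of (the strict part of) relation `le` on a finite set `X`:
bijections to `{1,…,n}` strictly monotone with respect to the order. -/
noncomputable def linExtCount (X : Type) [Fintype X] (le : X → X → Prop) : ℕ :=
  Nat.card {f : X ≃ Fin (Fintype.card X) // ∀ x y : X, le x y → x ≠ y → f x < f y}

/-- Number of linear extensions of the poset generated by an SP-expression. -/
noncomputable def SP.numLE (s : SP) : ℕ := linExtCount s.carrier s.le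

/-- Entropy of a finite poset: `log₂` of its number of linear extensions. -/
noncomputable def SP.entropy (s : SP) : ℝ := Real.logb 2 s.numLE

section Decomp

open Finset

variable {A B : Type} [Fintype A] [Fintype B]

/-- Series composition of two relations. -/
def serRel (ra : A → A → Prop) (rb : B → B → Prop) : A ⊕ B → A ⊕ B → Prop
  | .inl x, .inl y => ra x y
  | .inr x, .inr y => rb x y
  | .inl _, .inr _ => True
  | .inr _, .inl _ => False

/-- Parallel composition of two relations. -/
def parRel (ra : A → A → Prop) (rb : B → B → Prop) : A ⊕ B → A ⊕ B → Prop
  | .inl x, .inl y => ra x y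
  | .inr x, .inr y => rb x y
  | .inl _, .inr _ => False
  | .inr _, .inl _ => False

/-- The strict-monotonicity condition of a linear extension. -/
def extCond {X : Type} {n : ℕ} (r : X → X → Prop) (f : X ≃ Fin n) : Prop :=
  ∀ x y, r x y → x ≠ y → f x < f y

lemma complCard (S : Finset (Fin (Fintype.card A + Fintype.card B)))
    (hS : S.card = Fintype.card A) : Sᶜ.card = Fintype.card B := by
  rw [Finset.card_compl, hS, Fintype.card_fin]; omega

/-- Build a bijection `A ⊕ B ≃ Fin (cA + cB)` from a set of positions for `A`
and bijections for `A` and `B`. -/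
noncomputable def buildEquiv (S : Finset (Fin (Fintype.card A + Fintype.card B)))
    (hS : S.card = Fintype.card A) (fa : A ≃ Fin (Fintype.card A))
    (fb : B ≃ Fin (Fintype.card B)) :
    A ⊕ B ≃ Fin (Fintype.card A + Fintype.card B) :=
  (Equiv.sumCongr (fa.trans (S.orderIsoOfFin hS).toEquiv)
      (fb.trans ((Sᶜ).orderIsoOfFin (complCard S hS)).toEquiv)).trans
    ((Equiv.sumCongr (Equiv.refl _)
      (Equiv.subtypeEquivRight (fun x => Finset.mem_compl))).trans (Equiv.sumCompl (· ∈ S)))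

lemma buildEquiv_inl (S : Finset (Fin (Fintype.card A + Fintype.card B)))
    (hS : S.card = Fintype.card A) (fa : A ≃ Fin (Fintype.card A))
    (fb : B ≃ Fin (Fintype.card B)) (x : A) :
    buildEquiv S hS fa fb (Sum.inl x) = (S.orderIsoOfFin hS (fa x) : Fin _) := rfl

lemma buildEquiv_inr (S : Finset (Fin (Fintype.card A + Fintype.card B)))
    (hS : S.card = Fintype.card A) (fa : A ≃ Fin (Fintype.card A))
    (fb : B ≃ Fin (Fintype.card B)) (y : B) :
    buildEquiv S hS fa fb (Sum.inr y) = ((Sᶜ).orderIsoOfFin (complCard S hS) (fb y) : Fin _) := rfl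

lemma mem_iff_build (S : Finset (Fin (Fintype.card A + Fintype.card B))) (hS : S.card = Fintype.card A) (fa : A ≃ Fin (Fintype.card A))
    (fb : B ≃ Fin (Fintype.card B)) (i : Fin (Fintype.card A + Fintype.card B)) :
    i ∈ S ↔ ∃ x : A, buildEquiv S hS fa fb (Sum.inl x) = i := by
  constructor
  · intro hi
    refine ⟨fa.symm ((S.orderIsoOfFin hS).symm ⟨i, hi⟩), ?_⟩
    rw [buildEquiv_inl, Equiv.apply_symm_apply, OrderIso.apply_symm_apply]
  · rintro ⟨x, rfl⟩
    rw [buildEquiv_inl]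
    exact Finset.coe_mem _

lemma buildEquiv_injective :
    Function.Injective
      (fun t : {S : Finset (Fin (Fintype.card A + Fintype.card B)) // S.card = Fintype.card A} ×
          (A ≃ Fin (Fintype.card A)) × (B ≃ Fin (Fintype.card B)) =>
        buildEquiv t.1.1 t.1.2 t.2.1 t.2.2) := by
  rintro ⟨⟨S, hS⟩, fa, fb⟩ ⟨⟨S', hS'⟩, fa', fb'⟩ h
  simp only at h
  have hSS : S = S' := by
    ext i
    rw [mem_iff_build S hS fa fb i, mem_iff_build S' hS' fa' fb' i, h]
  subst hSS
  have hfa : fa = fa' := by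
    apply Equiv.ext; intro x
    have h1 : buildEquiv S hS fa fb (Sum.inl x) = buildEquiv S hS' fa' fb' (Sum.inl x) := by rw [h]
    rw [buildEquiv_inl, buildEquiv_inl] at h1
    exact (S.orderIsoOfFin hS).injective (Subtype.coe_injective h1)
  have hfb : fb = fb' := by
    apply Equiv.ext; intro y
    have h1 : buildEquiv S hS fa fb (Sum.inr y) = buildEquiv S hS' fa' fb' (Sum.inr y) := by rw [h]
    rw [buildEquiv_inr, buildEquiv_inr] at h1
    exact ((Sᶜ).orderIsoOfFin (complCard S hS)).injective (Subtype.coe_injective h1)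
  subst hfa; subst hfb; rfl

/-- Positions occupied by `A`. -/
def imgS (f : A ⊕ B ≃ Fin (Fintype.card A + Fintype.card B)) :
    Finset (Fin (Fintype.card A + Fintype.card B)) :=
  univ.image (fun x : A => f (Sum.inl x))

lemma imgS_card (f : A ⊕ B ≃ Fin (Fintype.card A + Fintype.card B)) :
    (imgS f).card = Fintype.card A := by
  rw [imgS, Finset.card_image_of_injective _ (fun x y h => Sum.inl_injective (f.injective h)),
    card_univ]

lemma mem_imgS (f : A ⊕ B ≃ Fin (Fintype.card A + Fintype.card B)) (x : A) :
    f (Sum.inl x) ∈ imgS f :=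
  Finset.mem_image_of_mem _ (mem_univ x)

lemma not_mem_imgS (f : A ⊕ B ≃ Fin (Fintype.card A + Fintype.card B)) (y : B) :
    f (Sum.inr y) ∉ imgS f := by
  intro h
  rw [imgS, Finset.mem_image] at h
  obtain ⟨x, -, hx⟩ := h
  exact absurd (f.injective hx) (by simp)

lemma mem_imgS_compl (f : A ⊕ B ≃ Fin (Fintype.card A + Fintype.card B)) (y : B) :
    f (Sum.inr y) ∈ (imgS f)ᶜ :=
  Finset.mem_compl.mpr (not_mem_imgS f y)

/-- The rank of `f (inl x)` among the positions occupied by `A`. -/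
noncomputable def rankA (f : A ⊕ B ≃ Fin (Fintype.card A + Fintype.card B)) :
    A ≃ Fin (Fintype.card A) :=
  (Equiv.ofBijective (fun x => (⟨f (Sum.inl x), mem_imgS f x⟩ : {i // i ∈ imgS f}))
      ⟨fun x y h => Sum.inl_injective (f.injective (congrArg Subtype.val h)),
       by
        rintro ⟨i, hi⟩
        rw [imgS, Finset.mem_image] at hi
        obtain ⟨x, -, hx⟩ := hi
        exact ⟨x, Subtype.ext hx⟩⟩).trans
    ((imgS f).orderIsoOfFin (imgS_card f)).toEquiv.symm

/-- The rank of `f (inr y)` among the positions occupied by `B`. -/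
noncomputable def rankB (f : A ⊕ B ≃ Fin (Fintype.card A + Fintype.card B)) :
    B ≃ Fin (Fintype.card B) :=
  (Equiv.ofBijective (fun y => (⟨f (Sum.inr y), mem_imgS_compl f y⟩ : {i // i ∈ (imgS f)ᶜ}))
      ⟨fun x y h => Sum.inr_injective (f.injective (congrArg Subtype.val h)),
       by
        rintro ⟨i, hi⟩
        rcases f.surjective i with ⟨z, rfl⟩
        rcases z with x | y
        · exact absurd (mem_imgS f x) (Finset.mem_compl.mp hi)
        · exact ⟨y, rfl⟩⟩).trans
    (((imgS f)ᶜ).orderIsoOfFin (complCard _ (imgS_card f))).toEquiv.symm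

lemma rankA_apply (f : A ⊕ B ≃ Fin (Fintype.card A + Fintype.card B)) (x : A) :
    rankA f x = ((imgS f).orderIsoOfFin (imgS_card f)).symm ⟨f (Sum.inl x), mem_imgS f x⟩ := rfl

lemma rankB_apply (f : A ⊕ B ≃ Fin (Fintype.card A + Fintype.card B)) (y : B) :
    rankB f y = (((imgS f)ᶜ).orderIsoOfFin (complCard _ (imgS_card f))).symm
      ⟨f (Sum.inr y), mem_imgS_compl f y⟩ := rfl

lemma rankA_lt_iff (f : A ⊕ B ≃ Fin (Fintype.card A + Fintype.card B)) (x y : A) :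
    rankA f x < rankA f y ↔ f (Sum.inl x) < f (Sum.inl y) := by
  rw [rankA_apply, rankA_apply, OrderIso.lt_iff_lt, Subtype.mk_lt_mk]

lemma rankB_lt_iff (f : A ⊕ B ≃ Fin (Fintype.card A + Fintype.card B)) (x y : B) :
    rankB f x < rankB f y ↔ f (Sum.inr x) < f (Sum.inr y) := by
  rw [rankB_apply, rankB_apply, OrderIso.lt_iff_lt, Subtype.mk_lt_mk]

lemma build_rank (f : A ⊕ B ≃ Fin (Fintype.card A + Fintype.card B)) :
    buildEquiv (imgS f) (imgS_card f) (rankA f) (rankB f) = f := by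
  apply Equiv.ext
  rintro (x | y)
  · rw [buildEquiv_inl, rankA_apply, OrderIso.apply_symm_apply]
  · rw [buildEquiv_inr, rankB_apply, OrderIso.apply_symm_apply]

/-- Decomposition of a bijection `A ⊕ B ≃ Fin (cA + cB)`. -/
noncomputable def decomp :
    (A ⊕ B ≃ Fin (Fintype.card A + Fintype.card B)) ≃
      {S : Finset (Fin (Fintype.card A + Fintype.card B)) // S.card = Fintype.card A} ×
        (A ≃ Fin (Fintype.card A)) × (B ≃ Fin (Fintype.card B)) where
  toFun f := (⟨imgS f, imgS_card f⟩, rankA f, rankB f)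
  invFun t := buildEquiv t.1.1 t.1.2 t.2.1 t.2.2
  left_inv f := build_rank f
  right_inv t := buildEquiv_injective (build_rank (buildEquiv t.1.1 t.1.2 t.2.1 t.2.2))

lemma parRel_cond (ra : A → A → Prop) (rb : B → B → Prop)
    (f : A ⊕ B ≃ Fin (Fintype.card A + Fintype.card B)) :
    extCond (parRel ra rb) f ↔ extCond ra (rankA f) ∧ extCond rb (rankB f) := by
  constructor
  · intro h
    constructor
    · intro x y hr hne
      exact (rankA_lt_iff f x y).mpr (h _ _ hr (fun e => hne (Sum.inl_injective e)))
    · intro x y hr hne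
      exact (rankB_lt_iff f x y).mpr (h _ _ hr (fun e => hne (Sum.inr_injective e)))
  · rintro ⟨h1, h2⟩ z w hr hne
    rcases z with x | x <;> rcases w with y | y
    · exact (rankA_lt_iff f x y).mp (h1 x y hr (fun e => hne (congrArg Sum.inl e)))
    · exact absurd hr id
    · exact absurd hr id
    · exact (rankB_lt_iff f x y).mp (h2 x y hr (fun e => hne (congrArg Sum.inr e)))

/-- The set of the `cA` lowest positions. -/
def lowSet : Finset (Fin (Fintype.card A + Fintype.card B)) :=
  univ.map (Fin.castAddEmb (Fintype.card B))

lemma lowSet_card : (lowSet (A := A) (B := B)).card = Fintype.card A := by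
  rw [lowSet, Finset.card_map, card_univ, Fintype.card_fin]

lemma mem_lowSet (i : Fin (Fintype.card A + Fintype.card B)) :
    i ∈ lowSet (A := A) (B := B) ↔ (i : ℕ) < Fintype.card A := by
  rw [lowSet, Finset.mem_map]
  constructor
  · rintro ⟨x, -, rfl⟩
    simpa [Fin.castAddEmb] using x.isLt
  · intro h
    exact ⟨⟨(i : ℕ), h⟩, mem_univ _, by ext; simp [Fin.castAddEmb]⟩

lemma cross_eq_lowSet (S : Finset (Fin (Fintype.card A + Fintype.card B)))
    (hS : S.card = Fintype.card A)
    (h : ∀ i ∈ S, ∀ j, j ∉ S → i < j) : S = lowSet (A := A) (B := B) := by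
  ext i
  rw [mem_lowSet]
  constructor
  · intro hi
    by_contra hcon
    push_neg at hcon
    have hsub : Sᶜ ⊆ Finset.Ioi i :=
      fun j hj => Finset.mem_Ioi.mpr (h i hi j (Finset.mem_compl.mp hj))
    have hle := Finset.card_le_card hsub
    rw [complCard S hS, Fin.card_Ioi] at hle
    have := i.isLt
    omega
  · intro hi
    by_contra hcon
    have hsub : S ⊆ Finset.Iio i :=
      fun j hj => Finset.mem_Iio.mpr (h j hj i hcon)
    have hle := Finset.card_le_card hsub
    rw [hS, Fin.card_Iio] at hle
    omega

lemma serRel_cond (ra : A → A → Prop) (rb : B → B → Prop)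
    (f : A ⊕ B ≃ Fin (Fintype.card A + Fintype.card B)) :
    extCond (serRel ra rb) f ↔
      (extCond ra (rankA f) ∧ extCond rb (rankB f)) ∧ imgS f = lowSet (A := A) (B := B) := by
  constructor
  · intro h
    refine ⟨⟨?_, ?_⟩, ?_⟩
    · intro x y hr hne
      exact (rankA_lt_iff f x y).mpr (h _ _ hr (fun e => hne (Sum.inl_injective e)))
    · intro x y hr hne
      exact (rankB_lt_iff f x y).mpr (h _ _ hr (fun e => hne (Sum.inr_injective e)))
    · apply cross_eq_lowSet _ (imgS_card f)
      intro i hi j hj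
      rw [imgS, Finset.mem_image] at hi
      obtain ⟨x, -, rfl⟩ := hi
      rcases f.surjective j with ⟨z, rfl⟩
      rcases z with x' | y
      · exact absurd (mem_imgS f x') hj
      · exact h (Sum.inl x) (Sum.inr y) trivial (by simp)
  · rintro ⟨⟨h1, h2⟩, heq⟩ z w hr hne
    rcases z with x | x <;> rcases w with y | y
    · exact (rankA_lt_iff f x y).mp (h1 x y hr (fun e => hne (congrArg Sum.inl e)))
    · have hx : ((f (Sum.inl x) : Fin _) : ℕ) < Fintype.card A := by
        rw [← mem_lowSet, ← heq]; exact mem_imgS f x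
      have hy : ¬ ((f (Sum.inr y) : Fin _) : ℕ) < Fintype.card A := by
        rw [← mem_lowSet, ← heq]; exact not_mem_imgS f y
      rw [Fin.lt_def]
      omega
    · exact absurd hr id
    · exact (rankB_lt_iff f x y).mp (h2 x y hr (fun e => hne (congrArg Sum.inr e)))

/-- Split a subtype of a triple. -/
def prodTripleEquiv {α β γ : Type*} {p : β → Prop} {q : γ → Prop} :
    {t : α × β × γ // p t.2.1 ∧ q t.2.2} ≃ α × {b // p b} × {c // q c} where
  toFun t := (t.1.1, ⟨t.1.2.1, t.2.1⟩, ⟨t.1.2.2, t.2.2⟩)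
  invFun u := ⟨(u.1, u.2.1.1, u.2.2.1), u.2.1.2, u.2.2.2⟩
  left_inv := by rintro ⟨⟨a, b, c⟩, h1, h2⟩; rfl
  right_inv := by rintro ⟨a, ⟨b, h⟩, ⟨c, h'⟩⟩; rfl

/-- Split a subtype of a triple with fixed first component. -/
def prodTripleFixEquiv {α β γ : Type*} {p : β → Prop} {q : γ → Prop} (a₀ : α) :
    {t : α × β × γ // (p t.2.1 ∧ q t.2.2) ∧ t.1 = a₀} ≃ {b // p b} × {c // q c} where
  toFun t := (⟨t.1.2.1, t.2.1.1⟩, ⟨t.1.2.2, t.2.1.2⟩)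
  invFun u := ⟨(a₀, u.1.1, u.2.1), ⟨u.1.2, u.2.2⟩, rfl⟩
  left_inv := by rintro ⟨⟨a, b, c⟩, ⟨h1, h2⟩, rfl⟩; rfl
  right_inv := by rintro ⟨⟨b, h⟩, ⟨c, h'⟩⟩; rfl

lemma linExtCount_parRel (ra : A → A → Prop) (rb : B → B → Prop) :
    linExtCount (A ⊕ B) (parRel ra rb) =
      (Fintype.card A + Fintype.card B).choose (Fintype.card A) *
        (linExtCount A ra * linExtCount B rb) := by
  unfold linExtCount
  rw [show Fintype.card (A ⊕ B) = Fintype.card A + Fintype.card B from Fintype.card_sum]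
  show Nat.card {f : A ⊕ B ≃ Fin (Fintype.card A + Fintype.card B) // extCond (parRel ra rb) f} =
    _ * (Nat.card {fa : A ≃ Fin (Fintype.card A) // extCond ra fa} *
      Nat.card {fb : B ≃ Fin (Fintype.card B) // extCond rb fb})
  rw [Nat.card_congr ((Equiv.subtypeEquiv decomp (fun f => parRel_cond ra rb f)).trans
    prodTripleEquiv)]
  rw [Nat.card_prod, Nat.card_prod, Nat.card_eq_fintype_card (α := {S : Finset _ // _}),
    Fintype.card_finset_len, Fintype.card_fin]

lemma linExtCount_serRel (ra : A → A → Prop) (rb : B → B → Prop) :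
    linExtCount (A ⊕ B) (serRel ra rb) = linExtCount A ra * linExtCount B rb := by
  unfold linExtCount
  rw [show Fintype.card (A ⊕ B) = Fintype.card A + Fintype.card B from Fintype.card_sum]
  have hiff : ∀ f : A ⊕ B ≃ Fin (Fintype.card A + Fintype.card B),
      extCond (serRel ra rb) f ↔
        ((extCond ra (decomp f).2.1 ∧ extCond rb (decomp f).2.2) ∧
          (decomp f).1 = ⟨lowSet (A := A) (B := B), lowSet_card⟩) := by
    intro f
    rw [serRel_cond ra rb f]
    constructor
    · rintro ⟨h1, h2⟩; exact ⟨h1, Subtype.ext h2⟩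
    · rintro ⟨h1, h2⟩; exact ⟨h1, congrArg Subtype.val h2⟩
  show Nat.card {f : A ⊕ B ≃ Fin (Fintype.card A + Fintype.card B) // extCond (serRel ra rb) f} =
    Nat.card {fa : A ≃ Fin (Fintype.card A) // extCond ra fa} *
      Nat.card {fb : B ≃ Fin (Fintype.card B) // extCond rb fb}
  rw [Nat.card_congr ((Equiv.subtypeEquiv decomp hiff).trans
    (prodTripleFixEquiv ⟨lowSet (A := A) (B := B), lowSet_card⟩))]
  rw [Nat.card_prod]

end Decomp
section SPLemmas

lemma SP.card_carrier (s : SP) : Fintype.card s.carrier = s.size := by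
  induction s with
  | leaf => rfl
  | ser a b iha ihb =>
      show Fintype.card (a.carrier ⊕ b.carrier) = a.size + b.size
      rw [Fintype.card_sum, iha, ihb]
  | par a b iha ihb =>
      show Fintype.card (a.carrier ⊕ b.carrier) = a.size + b.size
      rw [Fintype.card_sum, iha, ihb]

lemma SP.le_ser (a b : SP) : (SP.ser a b).le = serRel a.le b.le := by
  funext z w
  rcases z with x | x <;> rcases w with y | y <;> rfl

lemma SP.le_par (a b : SP) : (SP.par a b).le = parRel a.le b.le := by
  funext z w
  rcases z with x | x <;> rcases w with y | y <;> rfl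

lemma SP.numLE_leaf : SP.numLE .leaf = 1 := by
  have h1 : SP.numLE .leaf = Nat.card (Unit ≃ Fin (Fintype.card Unit)) := by
    refine Nat.card_congr (Equiv.subtypeUnivEquiv ?_)
    intro f x y _ hxy
    exact absurd rfl hxy
  rw [h1, Nat.card_eq_fintype_card, Fintype.card_equiv (Fintype.equivFin Unit)]
  simp

lemma SP.numLE_ser (a b : SP) : (SP.ser a b).numLE = a.numLE * b.numLE := by
  have h := linExtCount_serRel (A := a.carrier) (B := b.carrier) a.le b.le
  show linExtCount (a.carrier ⊕ b.carrier) (SP.ser a b).le = _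
  rw [SP.le_ser]
  exact h

lemma SP.numLE_par (a b : SP) :
    (SP.par a b).numLE = (a.size + b.size).choose a.size * (a.numLE * b.numLE) := by
  have h := linExtCount_parRel (A := a.carrier) (B := b.carrier) a.le b.le
  show linExtCount (a.carrier ⊕ b.carrier) (SP.par a b).le = _
  rw [SP.le_par]
  rw [SP.card_carrier, SP.card_carrier] at h
  exact h

lemma SP.size_dual (s : SP) : s.dual.size = s.size := by
  induction s with
  | leaf => rfl
  | ser a b iha ihb => show a.dual.size + b.dual.size = a.size + b.size; rw [iha, ihb]
  | par a b iha ihb => show a.dual.size + b.dual.size = a.size + b.size; rw [iha, ihb]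

lemma SP.numLE_pos (s : SP) : 0 < s.numLE := by
  induction s with
  | leaf => rw [SP.numLE_leaf]; norm_num
  | ser a b iha ihb => rw [SP.numLE_ser]; exact Nat.mul_pos iha ihb
  | par a b iha ihb =>
      rw [SP.numLE_par]
      exact Nat.mul_pos (Nat.choose_pos (Nat.le_add_right _ _)) (Nat.mul_pos iha ihb)

lemma SP.numLE_mul_dual (s : SP) : s.numLE * s.dual.numLE = (s.size).factorial := by
  induction s with
  | leaf => rw [show SP.leaf.dual = SP.leaf from rfl, SP.numLE_leaf]; rfl
  | ser a b iha ihb =>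
      have hC : (a.size + b.size).choose a.size * a.size.factorial * b.size.factorial =
          (a.size + b.size).factorial := by
        have h := Nat.choose_mul_factorial_mul_factorial (Nat.le_add_right a.size b.size)
        simpa [Nat.add_sub_cancel_left] using h
      calc (SP.ser a b).numLE * (SP.ser a b).dual.numLE
          = (a.numLE * b.numLE) *
            ((a.dual.size + b.dual.size).choose a.dual.size *
              (a.dual.numLE * b.dual.numLE)) := by
            rw [SP.numLE_ser, show (SP.ser a b).dual = SP.par a.dual b.dual from rfl,
              SP.numLE_par]
        _ = (a.size + b.size).choose a.size *
            ((a.numLE * a.dual.numLE) * (b.numLE * b.dual.numLE)) := by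
            rw [SP.size_dual, SP.size_dual]; ring
        _ = (a.size + b.size).choose a.size * (a.size.factorial * b.size.factorial) := by
            rw [iha, ihb]
        _ = (a.size + b.size).factorial := by rw [← hC]; ring
        _ = (SP.ser a b).size.factorial := rfl
  | par a b iha ihb =>
      have hC : (a.size + b.size).choose a.size * a.size.factorial * b.size.factorial =
          (a.size + b.size).factorial := by
        have h := Nat.choose_mul_factorial_mul_factorial (Nat.le_add_right a.size b.size)
        simpa [Nat.add_sub_cancel_left] using h
      calc (SP.par a b).numLE * (SP.par a b).dual.numLE
          = ((a.size + b.size).choose a.size * (a.numLE * b.numLE)) *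
            (a.dual.numLE * b.dual.numLE) := by
            rw [SP.numLE_par, show (SP.par a b).dual = SP.ser a.dual b.dual from rfl,
              SP.numLE_ser]
        _ = (a.size + b.size).choose a.size *
            ((a.numLE * a.dual.numLE) * (b.numLE * b.dual.numLE)) := by ring
        _ = (a.size + b.size).choose a.size * (a.size.factorial * b.size.factorial) := by
            rw [iha, ihb]
        _ = (a.size + b.size).factorial := by rw [← hC]; ring
        _ = (SP.par a b).size.factorial := rfl

end SPLemmas

/-- Entropy conservation: for an SP-expression `Ψ` on `n` variables generating order `α`
with dual order `α*`, `H(α) + H(α*) = log₂(n!)`. -/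
theorem sp_entropy_conservation (Ψ : SP) (n : ℕ) (hn : n = Ψ.size) :
    Ψ.entropy + Ψ.dual.entropy = Real.logb 2 (n.factorial) := by
  have h1 : (Ψ.numLE : ℝ) ≠ 0 := Nat.cast_ne_zero.mpr (SP.numLE_pos Ψ).ne'
  have h2 : (Ψ.dual.numLE : ℝ) ≠ 0 := Nat.cast_ne_zero.mpr (SP.numLE_pos Ψ.dual).ne'
  rw [SP.entropy, SP.entropy, ← Real.logb_mul h1 h2, ← Nat.cast_mul, SP.numLE_mul_dual, hn]
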